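/- Let ξ̄ > 0, let g : [0,ξ̄] → [0,∞) be Lebesgue integrable, let y₀ ∈ ℝ, and define the nondecreasing absolutely continuous function y(ξ) = y₀ + ∫₀^ξ g(ζ) dζ. Then for every Lebesgue measurable set I ⊆ [0,ξ̄], the image y(I) is Lebesgue measurable and Leb(y(I)) = ∫_I g(ξ) dξ. -/

import Mathlib

open MeasureTheory Set Real Filter Topology Metric
open scoped ENNReal

lemma aux_ae_hasDerivAt (G : ℝ → ℝ) (hGmeas : Measurable G)
    (hGint : Integrable G (volume : Measure ℝ)) :
    ∀ᵐ x : ℝ, HasDerivAt (fun ξ => ∫ t in (0:ℝ)..ξ, G t) (G x) x := by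
  have hGli : LocallyIntegrable G (volume : Measure ℝ) := hGint.locallyIntegrable
  filter_upwards [IsUnifLocDoublingMeasure.ae_tendsto_average
    (μ := (volume : Measure ℝ)) hGli 1] with x hx
  set F : ℝ → ℝ := fun ξ => ∫ t in (0:ℝ)..ξ, G t with hF
  rw [hasDerivAt_iff_tendsto_slope]
  have hII : ∀ a b : ℝ, IntervalIntegrable G volume a b := fun a b =>
    hGint.intervalIntegrable
  have key : ∀ z : ℝ, z ≠ x → slope F x z
      = ⨍ t in closedBall ((x + z) / 2) (|z - x| / 2), G t := by
    intro z hz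
    have hFz : F z - F x = ∫ t in x..z, G t := by
      rw [hF]; simp only
      rw [← intervalIntegral.integral_interval_sub_left (hII 0 z) (hII 0 x)]
    rcases lt_or_gt_of_ne hz with h | h
    · -- z < x
      have hb : closedBall ((x + z) / 2) (|z - x| / 2) = Icc z x := by
        rw [Real.closedBall_eq_Icc, abs_of_neg (by linarith : z - x < 0)]
        congr 1 <;> ring
      rw [hb, setAverage_eq, slope_def_field, Real.volume_real_Icc_of_le h.le, hFz,
        intervalIntegral.integral_symm, intervalIntegral.integral_of_le h.le,
        ← MeasureTheory.integral_Icc_eq_integral_Ioc, smul_eq_mul]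
      rw [div_eq_inv_mul, show x - z = -(z - x) by ring, inv_neg]
      ring
    · -- x < z
      have hb : closedBall ((x + z) / 2) (|z - x| / 2) = Icc x z := by
        rw [Real.closedBall_eq_Icc, abs_of_pos (by linarith : (0:ℝ) < z - x)]
        congr 1 <;> ring
      rw [hb, setAverage_eq, slope_def_field, Real.volume_real_Icc_of_le h.le, hFz,
        intervalIntegral.integral_of_le h.le,
        ← MeasureTheory.integral_Icc_eq_integral_Ioc, smul_eq_mul]
      rw [div_eq_inv_mul]
  have hδ : Tendsto (fun z : ℝ => |z - x| / 2) (𝓝[≠] x) (𝓝[>] 0) := by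
    rw [tendsto_nhdsWithin_iff]
    constructor
    · have : Tendsto (fun z : ℝ => |z - x| / 2) (𝓝 x) (𝓝 (|x - x| / 2)) :=
        (((continuous_id.sub continuous_const).abs.div_const 2).tendsto x)
      simpa using this.mono_left nhdsWithin_le_nhds
    · filter_upwards [self_mem_nhdsWithin] with z hz
      have : z - x ≠ 0 := sub_ne_zero.2 hz
      have := abs_pos.2 this
      exact div_pos this (by norm_num)
  have hmem : ∀ᶠ z in (𝓝[≠] x), x ∈ closedBall ((x + z) / 2) (1 * (|z - x| / 2)) := by
    filter_upwards with z
    rw [mem_closedBall, Real.dist_eq, one_mul]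
    rw [abs_sub_comm z x]
    have : x - (x + z) / 2 = (x - z) / 2 := by ring
    rw [this, abs_div]
    simp [abs_of_nonneg, le_refl]
  have := hx (fun z : ℝ => (x + z) / 2) (fun z : ℝ => |z - x| / 2) hδ hmem
  exact this.congr' (by filter_upwards [self_mem_nhdsWithin] with z hz
    using (key z hz).symm)

lemma aux_image_le_length (S : StieltjesFunction ℝ) (t : Set ℝ) :
    volume (S '' t) ≤ S.length t := by
  rw [S.length_eq]
  refine le_iInf fun a => le_iInf fun b => le_iInf fun h => ?_
  calc volume (S '' t) ≤ volume (Icc (S a) (S b)) := by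
        apply measure_mono
        rintro _ ⟨u, hu, rfl⟩
        have hu' : u ∈ t \ {x : ℝ | IsBot x} := ⟨hu, fun hb => absurd (hb (u-1)) (not_le.2 (sub_one_lt u))⟩
        exact ⟨S.mono (h hu').1.le, S.mono (h hu').2⟩
    _ = ENNReal.ofReal (S b - S a) := Real.volume_Icc

lemma aux_image_le_outer (S : StieltjesFunction ℝ) (A : Set ℝ) :
    volume (S '' A) ≤ S.outer A := by
  rw [StieltjesFunction.outer, OuterMeasure.ofFunction_apply]
  refine le_iInf₂ fun t ht => ?_
  calc volume (S '' A) ≤ volume (⋃ i, S '' t i) := by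
        apply measure_mono
        rw [← image_iUnion]
        exact image_mono ht
    _ ≤ ∑' i, volume (S '' t i) := measure_iUnion_le _
    _ ≤ ∑' i, S.length (t i) := ENNReal.tsum_le_tsum fun i => aux_image_le_length S (t i)

lemma aux_outer_eq_measure (S : StieltjesFunction ℝ) (A : Set ℝ) :
    S.outer A = S.measure A := by
  rw [← Measure.toOuterMeasure_apply, StieltjesFunction.measure_def]

/-- For the nondecreasing absolutely continuous function
`y(ξ) = y₀ + ∫₀^ξ g(ζ) dζ`, with `g ≥ 0` integrable, the image of every
Lebesgue measurable subset `I ⊆ [0,ξ̄]` is Lebesgue measurable and has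
Lebesgue measure `∫_I g`. -/
theorem stmt7 (ξbar : ℝ) (hξbar : 0 < ξbar)
    (g : ℝ → ℝ) (hgmeas : Measurable g)
    (hgnonneg : ∀ ξ ∈ Set.Icc (0:ℝ) ξbar, 0 ≤ g ξ)
    (hgint : IntegrableOn g (Set.Icc 0 ξbar))
    (y₀ : ℝ) (y : ℝ → ℝ)
    (hy : ∀ ξ : ℝ, y ξ = y₀ + ∫ ζ in (0:ℝ)..ξ, g ζ) :
    ∀ I : Set ℝ, I ⊆ Set.Icc 0 ξbar → NullMeasurableSet I volume →
      NullMeasurableSet (y '' I) volume ∧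
      volume (y '' I) = ∫⁻ ξ in I, ENNReal.ofReal (g ξ) := by
  classical
  set G : ℝ → ℝ := (Set.Icc (0:ℝ) ξbar).indicator g with hGdef
  have hGmeas : Measurable G := hgmeas.indicator measurableSet_Icc
  have hGnonneg : ∀ x, 0 ≤ G x := by
    intro x
    by_cases hx : x ∈ Set.Icc (0:ℝ) ξbar
    · rw [hGdef, indicator_of_mem hx]; exact hgnonneg x hx
    · rw [hGdef, indicator_of_notMem hx]
  have hGint : Integrable G := (integrable_indicator_iff measurableSet_Icc).2 hgint
  have hGII : ∀ a b : ℝ, IntervalIntegrable G volume a b := fun a b =>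
    hGint.intervalIntegrable
  set F : ℝ → ℝ := fun x => y₀ + ∫ t in (0:ℝ)..x, G t with hFdef
  have hFsub : ∀ a b : ℝ, F b - F a = ∫ t in a..b, G t := by
    intro a b
    rw [hFdef]; simp only
    rw [add_sub_add_left_eq_sub,
      intervalIntegral.integral_interval_sub_left (hGII 0 b) (hGII 0 a)]
  have hFmono : Monotone F := by
    intro a b hab
    have h0 : 0 ≤ F b - F a := by
      rw [hFsub]
      exact intervalIntegral.integral_nonneg hab fun u _ => hGnonneg u
    linarith
  have hFcont : Continuous F := continuous_const.add (hGint.continuous_primitive 0)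
  have hyF : Set.EqOn y F (Set.Icc 0 ξbar) := by
    intro x hx
    rw [hy x, hFdef]
    simp only
    congr 1
    apply intervalIntegral.integral_congr
    intro t ht
    rw [Set.uIcc_of_le hx.1] at ht
    have htI : t ∈ Set.Icc (0:ℝ) ξbar := ⟨ht.1, le_trans ht.2 hx.2⟩
    rw [hGdef, indicator_of_mem htI]
  set S : StieltjesFunction ℝ := ⟨F, hFmono, fun x => hFcont.continuousAt.continuousWithinAt⟩
    with hSdef
  have hScoe : (S : ℝ → ℝ) = F := rfl
  set ρ : Measure ℝ := volume.withDensity (fun x => ENNReal.ofReal (G x)) with hρdef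
  have hSmeas : S.measure = ρ := by
    refine Measure.ext_of_Ioc _ _ fun a b hab => ?_
    rw [S.measure_Ioc, hρdef, withDensity_apply _ measurableSet_Ioc]
    have h1 : F b - F a = ∫ t in Set.Ioc a b, G t := by
      rw [hFsub, intervalIntegral.integral_of_le hab.le]
    rw [hScoe, h1, ofReal_integral_eq_lintegral_ofReal hGint.integrableOn
      (Filter.Eventually.of_forall fun t => hGnonneg t)]
  have himgle : ∀ A : Set ℝ, volume (F '' A) ≤ ρ A := by
    intro A
    calc volume (F '' A) ≤ S.outer A := aux_image_le_outer S A
      _ = S.measure A := aux_outer_eq_measure S A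
      _ = ρ A := by rw [hSmeas]
  have hae' : ∀ᵐ x : ℝ, HasDerivAt F (G x) x := by
    filter_upwards [aux_ae_hasDerivAt G hGmeas hGint] with x hx
    rw [hFdef]
    exact hx.const_add y₀
  obtain ⟨E, hTE, hEmeas, hEnull⟩ := exists_measurable_superset_of_null (ae_iff.1 hae')
  set P : Set ℝ := (Set.Ioo 0 ξbar \ E) ∩ {x | 0 < g x} with hPdef
  have hPmeas : MeasurableSet P :=
    (measurableSet_Ioo.diff hEmeas).inter (measurableSet_lt measurable_const hgmeas)
  have hPderiv : ∀ x ∈ P, HasDerivAt F (g x) x := by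
    intro x hx
    have hxI : x ∈ Set.Icc (0:ℝ) ξbar := Set.Ioo_subset_Icc_self hx.1.1
    have hd : HasDerivAt F (G x) x := by
      by_contra h
      exact hx.1.2 (hTE h)
    rwa [hGdef, indicator_of_mem hxI] at hd
  have hPg : ∀ x ∈ P, 0 < g x := fun x hx => hx.2
  have hPinj : Set.InjOn F P := by
    have key : ∀ x1 ∈ P, ∀ x2 ∈ P, x1 < x2 → F x1 ≠ F x2 := by
      intro x1 h1 x2 h2 h12 heq
      have hd := hPderiv x1 h1
      rw [hasDerivAt_iff_tendsto_slope] at hd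
      have h2' : Tendsto (slope F x1) (𝓝[>] x1) (𝓝 (g x1)) :=
        hd.mono_left (nhdsWithin_mono _ fun z hz => ne_of_gt hz)
      have hz0 : ∀ᶠ z in 𝓝[>] x1, slope F x1 z = 0 := by
        filter_upwards [Ioc_mem_nhdsGT h12] with z hz
        have hzz : F z = F x1 := le_antisymm (heq ▸ hFmono hz.2) (hFmono hz.1.le)
        rw [slope_def_field, hzz, sub_self, zero_div]
      have h0 : g x1 = 0 := tendsto_nhds_unique (h2'.congr' hz0) tendsto_const_nhds
      exact absurd h0 (ne_of_gt (hPg x1 h1))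
    intro x1 h1 x2 h2 heq
    rcases lt_trichotomy x1 x2 with h | h | h
    · exact absurd heq (key x1 h1 x2 h2 h)
    · exact h
    · exact absurd heq.symm (key x2 h2 x1 h1 h)
  intro I hIsub hINm
  obtain ⟨I', hI'sub, hI'meas, hI'ae⟩ := hINm.exists_measurable_subset_ae_eq
  set s : Set ℝ := I' ∩ P with hsdef
  have hsmeas : MeasurableSet s := hI'meas.inter hPmeas
  have hsP : s ⊆ P := Set.inter_subset_right
  have hsI : s ⊆ I := fun x hx => hI'sub hx.1
  have hsderiv : ∀ x ∈ s, HasFDerivWithinAt F ((1:ℝ →L[ℝ] ℝ).smulRight (g x)) s x :=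
    fun x hx => ((hPderiv x (hsP hx)).hasDerivWithinAt).hasFDerivWithinAt
  have hsinj : Set.InjOn F s := hPinj.mono hsP
  have harea : ∫⁻ x in s, ENNReal.ofReal |g x| = volume (F '' s) := by
    have := lintegral_abs_det_fderiv_eq_addHaar_image volume hsmeas hsderiv hsinj
    simpa [ContinuousLinearMap.det_toSpanSingleton] using this
  have himgmeas : MeasurableSet (F '' s) :=
    measurable_image_of_fderivWithin hsmeas hsderiv hsinj
  have hII' : volume (I \ I') = 0 := by
    have h := hI'ae
    rw [Filter.eventuallyEq_set] at h
    exact (ae_eq_set.mp hI'ae).2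
  obtain ⟨H, hIH, hHmeas, hHnull⟩ := exists_measurable_superset_of_null hII'
  set Z : Set ℝ := (H ∪ E ∪ {x | g x ≤ 0} ∪ {0, ξbar}) ∩ Set.Icc 0 ξbar with hZdef
  have hZmeas : MeasurableSet Z := by
    apply MeasurableSet.inter _ measurableSet_Icc
    exact ((hHmeas.union hEmeas).union (measurableSet_le hgmeas measurable_const)).union
      ((measurableSet_singleton ξbar).insert 0)
  have hNZ : I \ s ⊆ Z := by
    intro x hx
    refine ⟨?_, hIsub hx.1⟩
    by_cases hxI' : x ∈ I'
    · by_cases hxIoo : x ∈ Set.Ioo 0 ξbar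
      · by_cases hxE : x ∈ E
        · exact Or.inl (Or.inl (Or.inr hxE))
        · have hng : ¬ 0 < g x := fun hg => hx.2 ⟨hxI', ⟨⟨hxIoo, hxE⟩, hg⟩⟩
          exact Or.inl (Or.inr (not_lt.1 hng))
      · have hxIcc := hIsub hx.1
        right
        rcases eq_or_lt_of_le hxIcc.1 with h0 | h0
        · exact Or.inl h0.symm
        rcases eq_or_lt_of_le hxIcc.2 with h1 | h1
        · exact Or.inr h1
        · exact absurd ⟨h0, h1⟩ hxIoo
    · exact Or.inl (Or.inl (Or.inl (hIH ⟨hx.1, hxI'⟩)))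
  have hρvol : ρ ≪ volume := withDensity_absolutelyContinuous _ _
  have hρZ : ρ Z = 0 := by
    have hsub : Z ⊆ H ∪ E ∪ ({x | g x ≤ 0} ∩ Set.Icc 0 ξbar) ∪ ({0, ξbar} : Set ℝ) := by
      rintro x ⟨hx1, hx2⟩
      rcases hx1 with ((h | h) | h) | h
      · exact Or.inl (Or.inl (Or.inl h))
      · exact Or.inl (Or.inl (Or.inr h))
      · exact Or.inl (Or.inr ⟨h, hx2⟩)
      · exact Or.inr h
    refine le_antisymm ?_ zero_le
    calc ρ Z ≤ ρ (H ∪ E ∪ ({x | g x ≤ 0} ∩ Set.Icc 0 ξbar) ∪ ({0, ξbar} : Set ℝ)) :=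
          measure_mono hsub
      _ ≤ ρ (H ∪ E ∪ ({x | g x ≤ 0} ∩ Set.Icc 0 ξbar)) + ρ ({0, ξbar} : Set ℝ) :=
          measure_union_le _ _
      _ ≤ (ρ (H ∪ E) + ρ ({x | g x ≤ 0} ∩ Set.Icc 0 ξbar)) + ρ ({0, ξbar} : Set ℝ) := by
          gcongr
          exact measure_union_le _ _
      _ ≤ ((ρ H + ρ E) + ρ ({x | g x ≤ 0} ∩ Set.Icc 0 ξbar)) + ρ ({0, ξbar} : Set ℝ) := by
          gcongr
          exact measure_union_le _ _
      _ = 0 := by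
          have h1 : ρ H = 0 := hρvol hHnull
          have h2 : ρ E = 0 := hρvol hEnull
          have h3 : ρ ({x | g x ≤ 0} ∩ Set.Icc 0 ξbar) = 0 := by
            have hm : MeasurableSet ({x | g x ≤ 0} ∩ Set.Icc (0:ℝ) ξbar) :=
              (measurableSet_le hgmeas measurable_const).inter measurableSet_Icc
            rw [hρdef, withDensity_apply _ hm]
            have hzero : ∀ x ∈ {x | g x ≤ 0} ∩ Set.Icc (0:ℝ) ξbar,
                ENNReal.ofReal (G x) = (0 : ℝ → ℝ≥0∞) x := by
              intro x hx
              rw [hGdef, indicator_of_mem hx.2]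
              simp only [Pi.zero_apply, ENNReal.ofReal_eq_zero]
              exact hx.1
            rw [setLIntegral_congr_fun hm hzero]
            simp
          have h4 : ρ ({0, ξbar} : Set ℝ) = 0 :=
            hρvol (Set.Countable.measure_zero
              (((Set.finite_singleton ξbar).insert 0).countable) _)
          rw [h1, h2, h3, h4]
          simp
  have hyz : volume (y '' (I \ s)) = 0 := by
    have himg_eq : y '' (I \ s) = F '' (I \ s) :=
      Set.image_congr fun x hx => hyF (hIsub hx.1)
    rw [himg_eq]
    refine le_antisymm ?_ zero_le
    calc volume (F '' (I \ s)) ≤ ρ (I \ s) := himgle _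
      _ ≤ ρ Z := measure_mono hNZ
      _ = 0 := hρZ
  have hysI : y '' I = F '' s ∪ y '' (I \ s) := by
    have h1 : y '' s = F '' s := Set.image_congr fun x hx => hyF (hIsub (hsI hx))
    rw [← h1, ← Set.image_union, Set.union_diff_cancel hsI]
  constructor
  · rw [hysI]
    exact himgmeas.nullMeasurableSet.union (NullMeasurableSet.of_null hyz)
  · have hvol : volume (y '' I) = volume (F '' s) := by
      rw [hysI]
      exact le_antisymm (le_trans (measure_union_le _ _) (by rw [hyz, add_zero]))
        (measure_mono Set.subset_union_left)
    have habs : ∫⁻ x in s, ENNReal.ofReal |g x| = ∫⁻ x in s, ENNReal.ofReal (g x) := by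
      refine setLIntegral_congr_fun hsmeas (fun x hx => ?_)
      rw [abs_of_pos (hPg x (hsP hx))]
    have hdiffnull : ∫⁻ x in I \ s, ENNReal.ofReal (g x) = 0 := by
      have hle : ∫⁻ x in I \ s, ENNReal.ofReal (g x) ≤ ∫⁻ x in Z, ENNReal.ofReal (g x) :=
        lintegral_mono_set hNZ
      have hZeq : ∫⁻ x in Z, ENNReal.ofReal (g x) = ρ Z := by
        rw [hρdef, withDensity_apply _ hZmeas]
        refine setLIntegral_congr_fun hZmeas (fun x hx => ?_)
        rw [hGdef, indicator_of_mem hx.2]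
      refine le_antisymm ?_ zero_le
      rw [hZeq, hρZ] at hle
      exact hle
    have hsplit : ∫⁻ x in I, ENNReal.ofReal (g x) = ∫⁻ x in s, ENNReal.ofReal (g x) := by
      refine le_antisymm ?_ (lintegral_mono_set hsI)
      calc ∫⁻ x in I, ENNReal.ofReal (g x)
          = ∫⁻ x in s ∪ (I \ s), ENNReal.ofReal (g x) := by
            rw [Set.union_diff_cancel hsI]
        _ ≤ (∫⁻ x in s, ENNReal.ofReal (g x)) + ∫⁻ x in I \ s, ENNReal.ofReal (g x) :=
            lintegral_union_le _ _ _
        _ = ∫⁻ x in s, ENNReal.ofReal (g x) := by rw [hdiffnull, add_zero]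
    rw [hvol, ← harea, habs, hsplit]
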